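/- Let φ : (0,1) → ℝ⁺ be integrable, set f = ∫₀¹ φ(x) dx, and for λ > 0 let E_λ = { x ∈ (0,1) : Mφ(x) > λ }, where Mφ is the maximal function of φ relative to (0,1). Then for every λ ≥ f one has |E_λ| ≥ (1/λ) ∫_{E_λ} φ(x) dx. -/

import Mathlib

open MeasureTheory Set

/-- The uncentered Hardy–Littlewood maximal function of `φ` relative to the interval `(0,1)`:
`Mφ(x) = sup { (1/|I|) ∫_I |φ| : x ∈ I, I an open subinterval of (0,1) }`. -/
noncomputable def maximalFn (φ : ℝ → ℝ) (x : ℝ) : ℝ :=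
  sSup { r : ℝ | ∃ a b : ℝ, 0 ≤ a ∧ a < x ∧ x < b ∧ b ≤ 1 ∧
    r = (b - a)⁻¹ * ∫ t in Set.Ioo a b, |φ t| }

namespace WeakTypeAux

/-- The union of all open subintervals of `(0,1)` on which the average of `φ` exceeds `lam`. -/
def goodSet (φ : ℝ → ℝ) (lam : ℝ) : Set ℝ :=
  {x | ∃ a b : ℝ, 0 ≤ a ∧ a < x ∧ x < b ∧ b ≤ 1 ∧
    lam * (b - a) < ∫ t in Set.Ioo a b, φ t}

variable {φ : ℝ → ℝ} {lam : ℝ}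

lemma goodSet_subset : goodSet φ lam ⊆ Set.Ioo 0 1 := by
  rintro x ⟨a, b, h0, hax, hxb, hb1, -⟩
  exact ⟨lt_of_le_of_lt h0 hax, lt_of_lt_of_le hxb hb1⟩

lemma Ioo_subset_goodSet {a b : ℝ} (h0 : 0 ≤ a) (hb1 : b ≤ 1)
    (h : lam * (b - a) < ∫ t in Set.Ioo a b, φ t) : Set.Ioo a b ⊆ goodSet φ lam :=
  fun y hy => ⟨a, b, h0, hy.1, hy.2, hb1, h⟩

lemma isOpen_goodSet : IsOpen (goodSet φ lam) := by
  rw [isOpen_iff_mem_nhds]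
  rintro x ⟨a, b, h0, hax, hxb, hb1, hI⟩
  exact Filter.mem_of_superset (Ioo_mem_nhds hax hxb) (Ioo_subset_goodSet h0 hb1 hI)

/-- Left endpoint of the maximal good interval around `x`. -/
noncomputable def alphaE (φ : ℝ → ℝ) (lam : ℝ) (x : ℝ) : ℝ :=
  sInf {a | 0 ≤ a ∧ Set.Ioo a x ⊆ goodSet φ lam}

/-- Right endpoint of the maximal good interval around `x`. -/
noncomputable def betaE (φ : ℝ → ℝ) (lam : ℝ) (x : ℝ) : ℝ :=
  sSup {b | b ≤ 1 ∧ Set.Ioo x b ⊆ goodSet φ lam}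

lemma alphaE_spec {x : ℝ} (hx : x ∈ goodSet φ lam) :
    0 ≤ alphaE φ lam x ∧ alphaE φ lam x < x ∧
      Set.Ioo (alphaE φ lam x) x ⊆ goodSet φ lam ∧ alphaE φ lam x ∉ goodSet φ lam := by
  set A : Set ℝ := {a | 0 ≤ a ∧ Set.Ioo a x ⊆ goodSet φ lam} with hA
  obtain ⟨a, b, h0, hax, hxb, hb1, hI⟩ := hx
  have hxI : x ∈ Set.Ioo (0:ℝ) 1 := goodSet_subset ⟨a, b, h0, hax, hxb, hb1, hI⟩
  have hxA : x ∈ A := ⟨hxI.1.le, by simp⟩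
  have hne : A.Nonempty := ⟨x, hxA⟩
  have hbdd : BddBelow A := ⟨0, fun y hy => hy.1⟩
  have hmemA : a ∈ A :=
    ⟨h0, fun y hy => Ioo_subset_goodSet h0 hb1 hI ⟨hy.1, lt_trans hy.2 hxb⟩⟩
  have h1 : 0 ≤ alphaE φ lam x := le_csInf hne fun y hy => hy.1
  have h2 : alphaE φ lam x < x := lt_of_le_of_lt (csInf_le hbdd hmemA) hax
  have h3 : Set.Ioo (alphaE φ lam x) x ⊆ goodSet φ lam := by
    intro t ht
    obtain ⟨a', ha'A, ha't⟩ := exists_lt_of_csInf_lt hne ht.1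
    exact ha'A.2 ⟨ha't, ht.2⟩
  refine ⟨h1, h2, h3, ?_⟩
  intro hα
  obtain ⟨a', b', h0', ha'α, hαb', hb1', hI'⟩ := hα
  have hmem : a' ∈ A := by
    refine ⟨h0', fun t ht => ?_⟩
    rcases le_or_gt t (alphaE φ lam x) with h | h
    · exact Ioo_subset_goodSet h0' hb1' hI' ⟨ht.1, lt_of_le_of_lt h hαb'⟩
    · exact h3 ⟨h, ht.2⟩
  exact absurd (csInf_le hbdd hmem) (not_le.mpr ha'α)

lemma betaE_spec {x : ℝ} (hx : x ∈ goodSet φ lam) :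
    betaE φ lam x ≤ 1 ∧ x < betaE φ lam x ∧
      Set.Ioo x (betaE φ lam x) ⊆ goodSet φ lam ∧ betaE φ lam x ∉ goodSet φ lam := by
  set B : Set ℝ := {b | b ≤ 1 ∧ Set.Ioo x b ⊆ goodSet φ lam} with hB
  obtain ⟨a, b, h0, hax, hxb, hb1, hI⟩ := hx
  have hxI : x ∈ Set.Ioo (0:ℝ) 1 := goodSet_subset ⟨a, b, h0, hax, hxb, hb1, hI⟩
  have hxB : x ∈ B := ⟨hxI.2.le, by simp⟩
  have hne : B.Nonempty := ⟨x, hxB⟩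
  have hbdd : BddAbove B := ⟨1, fun y hy => hy.1⟩
  have hmemB : b ∈ B :=
    ⟨hb1, fun y hy => Ioo_subset_goodSet h0 hb1 hI ⟨lt_trans hax hy.1, hy.2⟩⟩
  have h1 : betaE φ lam x ≤ 1 := csSup_le hne fun y hy => hy.1
  have h2 : x < betaE φ lam x := lt_of_lt_of_le hxb (le_csSup hbdd hmemB)
  have h3 : Set.Ioo x (betaE φ lam x) ⊆ goodSet φ lam := by
    intro t ht
    obtain ⟨b', hb'B, htb'⟩ := exists_lt_of_lt_csSup hne ht.2
    exact hb'B.2 ⟨ht.1, htb'⟩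
  refine ⟨h1, h2, h3, ?_⟩
  intro hβ
  obtain ⟨a', b', h0', ha'β, hβb', hb1', hI'⟩ := hβ
  have hmem : b' ∈ B := by
    refine ⟨hb1', fun t ht => ?_⟩
    rcases lt_or_ge t (betaE φ lam x) with h | h
    · exact h3 ⟨ht.1, h⟩
    · exact Ioo_subset_goodSet h0' hb1' hI' ⟨lt_of_lt_of_le ha'β h, ht.2⟩
  exact absurd (le_csSup hbdd hmem) (not_le.mpr hβb')

lemma Ioo_alpha_beta_subset {x : ℝ} (hx : x ∈ goodSet φ lam) :
    Set.Ioo (alphaE φ lam x) (betaE φ lam x) ⊆ goodSet φ lam := by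
  intro t ht
  rcases lt_trichotomy t x with h | h | h
  · exact (alphaE_spec hx).2.2.1 ⟨ht.1, h⟩
  · exact h ▸ hx
  · exact (betaE_spec hx).2.2.1 ⟨h, ht.2⟩

lemma maximal_interval_eq {x y : ℝ} (hx : x ∈ goodSet φ lam) (hy : y ∈ goodSet φ lam)
    (h : (Set.Ioo (alphaE φ lam x) (betaE φ lam x) ∩
      Set.Ioo (alphaE φ lam y) (betaE φ lam y)).Nonempty) :
    alphaE φ lam x = alphaE φ lam y ∧ betaE φ lam x = betaE φ lam y := by
  obtain ⟨z, hzx, hzy⟩ := h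
  constructor
  · refine le_antisymm (not_lt.mp fun hlt => ?_) (not_lt.mp fun hlt => ?_)
    · exact (alphaE_spec hx).2.2.2 (Ioo_alpha_beta_subset hy ⟨hlt, hzx.1.trans hzy.2⟩)
    · exact (alphaE_spec hy).2.2.2 (Ioo_alpha_beta_subset hx ⟨hlt, hzy.1.trans hzx.2⟩)
  · refine le_antisymm (not_lt.mp fun hlt => ?_) (not_lt.mp fun hlt => ?_)
    · exact (betaE_spec hy).2.2.2 (Ioo_alpha_beta_subset hx ⟨hzx.1.trans hzy.2, hlt⟩)
    · exact (betaE_spec hx).2.2.2 (Ioo_alpha_beta_subset hy ⟨hzy.1.trans hzx.2, hlt⟩)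


lemma Ioo_sub_unit {a b : ℝ} (h0 : 0 ≤ a) (hb1 : b ≤ 1) : Set.Ioo a b ⊆ Set.Ioo (0:ℝ) 1 :=
  fun t ht => ⟨lt_of_le_of_lt h0 ht.1, lt_of_lt_of_le ht.2 hb1⟩

lemma restrict_nonneg (hpos : ∀ x ∈ Set.Ioo (0:ℝ) 1, 0 < φ x) {s : Set ℝ}
    (hs : MeasurableSet s) (hsub : s ⊆ Set.Ioo 0 1) : 0 ≤ᵐ[volume.restrict s] φ :=
  (ae_restrict_iff' hs).mpr (Filter.Eventually.of_forall fun t ht => (hpos t (hsub ht)).le)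

lemma integral_Ioo_le (hpos : ∀ x ∈ Set.Ioo (0:ℝ) 1, 0 < φ x)
    (hint : IntegrableOn φ (Set.Ioo 0 1))
    (hlam : (∫ x in Set.Ioo (0:ℝ) 1, φ x) ≤ lam) (hlam0 : 0 < lam)
    {α β : ℝ} (h0 : 0 ≤ α) (hαβ : α < β) (hβ1 : β ≤ 1)
    (hα : α ∉ goodSet φ lam) (hβ : β ∉ goodSet φ lam) :
    (∫ t in Set.Ioo α β, φ t) ≤ lam * (β - α) := by
  simp only [goodSet, Set.mem_setOf_eq] at hα hβ
  push_neg at hα hβ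
  rcases h0.eq_or_lt with h0' | h0'
  · subst h0'
    rcases hβ1.lt_or_eq with hβ1' | hβ1'
    · -- α = 0, β < 1 : use the right endpoint
      refine le_of_forall_sub_le fun δ hδ => ?_
      set ε := min (δ / lam) (1 - β) with hε
      have hε0 : 0 < ε := lt_min (div_pos hδ hlam0) (by linarith)
      have hβε : β + ε ≤ 1 := by
        have := min_le_right (δ / lam) (1 - β); simp only [← hε] at this; linarith
      have h2 := hβ 0 (β + ε) le_rfl hαβ (by linarith) hβε
      have h1 : (∫ t in Set.Ioo (0:ℝ) β, φ t) ≤ ∫ t in Set.Ioo (0:ℝ) (β + ε), φ t :=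
        setIntegral_mono_set (hint.mono_set (Ioo_sub_unit le_rfl hβε))
          (restrict_nonneg hpos measurableSet_Ioo (Ioo_sub_unit le_rfl hβε))
          ((Set.Ioo_subset_Ioo_right (by linarith)).eventuallyLE)
      have hlε : lam * ε ≤ δ := by
        calc lam * ε ≤ lam * (δ / lam) :=
              mul_le_mul_of_nonneg_left (min_le_left _ _) hlam0.le
          _ = δ := mul_div_cancel₀ δ hlam0.ne'
      have hring : lam * (β + ε - 0) = lam * (β - 0) + lam * ε := by ring
      linarith
    · -- α = 0, β = 1 : use the global bound
      subst hβ1'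
      calc (∫ t in Set.Ioo (0:ℝ) 1, φ t) ≤ lam := hlam
        _ = lam * (1 - 0) := by ring
  · -- 0 < α : use the left endpoint
    refine le_of_forall_sub_le fun δ hδ => ?_
    set ε := min (δ / lam) α with hε
    have hε0 : 0 < ε := lt_min (div_pos hδ hlam0) h0'
    have hεα : ε ≤ α := min_le_right _ _
    have h2 := hα (α - ε) β (by linarith) (by linarith) hαβ hβ1
    have h1 : (∫ t in Set.Ioo α β, φ t) ≤ ∫ t in Set.Ioo (α - ε) β, φ t :=
      setIntegral_mono_set (hint.mono_set (Ioo_sub_unit (by linarith) hβ1))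
        (restrict_nonneg hpos measurableSet_Ioo (Ioo_sub_unit (by linarith) hβ1))
        ((Set.Ioo_subset_Ioo_left (by linarith)).eventuallyLE)
    have hlε : lam * ε ≤ δ := by
      calc lam * ε ≤ lam * (δ / lam) :=
            mul_le_mul_of_nonneg_left (min_le_left _ _) hlam0.le
        _ = δ := mul_div_cancel₀ δ hlam0.ne'
    have hring : lam * (β - (α - ε)) = lam * (β - α) + lam * ε := by ring
    linarith

lemma volume_goodSet_ne_top : volume (goodSet φ lam) ≠ ⊤ := by
  refine ne_of_lt (lt_of_le_of_lt (measure_mono goodSet_subset) ?_)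
  rw [Real.volume_Ioo]
  exact ENNReal.ofReal_lt_top

lemma integral_compact_le (hpos : ∀ x ∈ Set.Ioo (0:ℝ) 1, 0 < φ x)
    (hint : IntegrableOn φ (Set.Ioo 0 1))
    (hlam : (∫ x in Set.Ioo (0:ℝ) 1, φ x) ≤ lam) (hlam0 : 0 < lam)
    {K : Set ℝ} (hK : IsCompact K) (hKU : K ⊆ goodSet φ lam) :
    (∫ x in K, φ x) ≤ lam * (volume (goodSet φ lam)).toReal := by
  obtain ⟨t, htK, hcover⟩ := hK.elim_nhds_subcover
    (fun x => Set.Ioo (alphaE φ lam x) (betaE φ lam x))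
    (fun x hx => Ioo_mem_nhds (alphaE_spec (hKU hx)).2.1 (betaE_spec (hKU hx)).2.1)
  classical
  set t' : Finset (ℝ × ℝ) := t.image (fun x => (alphaE φ lam x, betaE φ lam x)) with ht'
  set V := ⋃ p ∈ t', Set.Ioo p.1 p.2 with hV
  have hVeq : V = ⋃ x ∈ t, Set.Ioo (alphaE φ lam x) (betaE φ lam x) := by
    rw [hV, ht']
    exact Finset.set_biUnion_finset_image
  have hp : ∀ p ∈ t', 0 ≤ p.1 ∧ p.1 < p.2 ∧ p.2 ≤ 1 ∧ Set.Ioo p.1 p.2 ⊆ goodSet φ lam ∧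
      (∫ s in Set.Ioo p.1 p.2, φ s) ≤ lam * (p.2 - p.1) := by
    intro p hpt
    obtain ⟨x, hxt, rfl⟩ := Finset.mem_image.mp hpt
    have hxU := hKU (htK x hxt)
    obtain ⟨hα0, hαx, -, hαn⟩ := alphaE_spec hxU
    obtain ⟨hβ1, hxβ, -, hβn⟩ := betaE_spec hxU
    exact ⟨hα0, hαx.trans hxβ, hβ1, Ioo_alpha_beta_subset hxU,
      integral_Ioo_le hpos hint hlam hlam0 hα0 (hαx.trans hxβ) hβ1 hαn hβn⟩
  have hdisj : (↑t' : Set (ℝ × ℝ)).PairwiseDisjoint (fun p : ℝ × ℝ => Set.Ioo p.1 p.2) := by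
    intro p hpt q hqt hpq
    obtain ⟨x, hxt, rfl⟩ := Finset.mem_image.mp (Finset.mem_coe.mp hpt)
    obtain ⟨y, hyt, rfl⟩ := Finset.mem_image.mp (Finset.mem_coe.mp hqt)
    rw [Function.onFun, Set.disjoint_iff_inter_eq_empty]
    by_contra hne
    obtain ⟨hae, hbe⟩ := maximal_interval_eq (hKU (htK x hxt)) (hKU (htK y hyt))
      (Set.nonempty_iff_ne_empty.mpr hne)
    exact hpq (by rw [hae, hbe])
  have hVsub : V ⊆ goodSet φ lam := Set.iUnion₂_subset fun p hpt => (hp p hpt).2.2.2.1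
  have hVunit : V ⊆ Set.Ioo 0 1 := hVsub.trans goodSet_subset
  have hVmeas : MeasurableSet V := t'.measurableSet_biUnion fun p _ => measurableSet_Ioo
  have h1 : (∫ x in K, φ x) ≤ ∫ x in V, φ x :=
    setIntegral_mono_set (hint.mono_set hVunit) (restrict_nonneg hpos hVmeas hVunit)
      ((hVeq ▸ hcover : K ⊆ V).eventuallyLE)
  have h2 : (∫ x in V, φ x) = ∑ p ∈ t', ∫ x in Set.Ioo p.1 p.2, φ x :=
    integral_biUnion_finset t' (fun p _ => measurableSet_Ioo) hdisj
      (fun p hpt => hint.mono_set (Ioo_sub_unit (hp p hpt).1 (hp p hpt).2.2.1))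
  have h3 : ∑ p ∈ t', (∫ x in Set.Ioo p.1 p.2, φ x) ≤ ∑ p ∈ t', lam * (p.2 - p.1) :=
    Finset.sum_le_sum fun p hpt => (hp p hpt).2.2.2.2
  have h4 : ∑ p ∈ t', lam * (p.2 - p.1) = lam * (volume V).toReal := by
    have hvol : volume V = ∑ p ∈ t', volume (Set.Ioo p.1 p.2) :=
      measure_biUnion_finset hdisj (fun p _ => measurableSet_Ioo)
    rw [hvol, ENNReal.toReal_sum (fun p _ => by simp [Real.volume_Ioo]), Finset.mul_sum]
    refine Finset.sum_congr rfl fun p hpt => ?_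
    rw [Real.volume_Ioo, ENNReal.toReal_ofReal (by linarith [(hp p hpt).2.1])]
  have h5 : (volume V).toReal ≤ (volume (goodSet φ lam)).toReal :=
    ENNReal.toReal_mono volume_goodSet_ne_top (measure_mono hVsub)
  calc (∫ x in K, φ x) ≤ ∑ p ∈ t', lam * (p.2 - p.1) := by rw [← h2] at h3; linarith
    _ = lam * (volume V).toReal := h4
    _ ≤ lam * (volume (goodSet φ lam)).toReal := mul_le_mul_of_nonneg_left h5 hlam0.le

lemma integral_goodSet_le (hpos : ∀ x ∈ Set.Ioo (0:ℝ) 1, 0 < φ x)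
    (hint : IntegrableOn φ (Set.Ioo 0 1))
    (hlam : (∫ x in Set.Ioo (0:ℝ) 1, φ x) ≤ lam) (hlam0 : 0 < lam) :
    (∫ x in goodSet φ lam, φ x) ≤ lam * (volume (goodSet φ lam)).toReal := by
  set U := goodSet (φ := φ) (lam := lam) with hUdef
  have hUopen : IsOpen U := isOpen_goodSet
  have hcne : Uᶜ.Nonempty := ⟨2, fun h => by
    have := goodSet_subset h
    rw [Set.mem_Ioo] at this
    linarith [this.2]⟩
  set K : ℕ → Set ℝ := fun n => {x | ((n:ℝ)+1)⁻¹ ≤ Metric.infDist x Uᶜ} ∩ Set.Icc 0 1 with hK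
  have hKclosed : ∀ n, IsClosed (K n) := fun n =>
    (isClosed_le continuous_const (Metric.continuous_infDist_pt _)).inter isClosed_Icc
  have hKcompact : ∀ n, IsCompact (K n) := fun n =>
    isCompact_Icc.of_isClosed_subset (hKclosed n) Set.inter_subset_right
  have hKU : ∀ n, K n ⊆ U := by
    intro n x hx
    by_contra hxU
    have h1 : Metric.infDist x Uᶜ = 0 := Metric.infDist_zero_of_mem hxU
    have h2 := hx.1
    rw [Set.mem_setOf_eq, h1] at h2
    have : (0:ℝ) < ((n:ℝ)+1)⁻¹ := by positivity
    linarith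
  have hmono : Monotone K := by
    intro m n hmn x hx
    have h1 : ((m:ℝ)+1)⁻¹ ≤ Metric.infDist x Uᶜ := hx.1
    have h2 : ((n:ℝ)+1)⁻¹ ≤ ((m:ℝ)+1)⁻¹ :=
      inv_anti₀ (by positivity) (by exact_mod_cast Nat.succ_le_succ hmn)
    exact ⟨Set.mem_setOf_eq ▸ le_trans h2 h1, hx.2⟩
  have hUnion : (⋃ n, K n) = U := by
    refine Set.Subset.antisymm (Set.iUnion_subset hKU) fun x hx => ?_
    have hpos' : 0 < Metric.infDist x Uᶜ :=
      (hUopen.isClosed_compl.notMem_iff_infDist_pos hcne).mp (by simpa using hx)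
    obtain ⟨n, hn⟩ := exists_nat_ge (Metric.infDist x Uᶜ)⁻¹
    have h1 : ((n:ℝ)+1)⁻¹ ≤ Metric.infDist x Uᶜ := by
      rw [inv_le_comm₀ (by positivity) hpos']
      · linarith
    have hxI : x ∈ Set.Ioo (0:ℝ) 1 := goodSet_subset hx
    exact Set.mem_iUnion.mpr ⟨n, h1, hxI.1.le, hxI.2.le⟩
  have hfi : IntegrableOn φ (⋃ n, K n) := by
    rw [hUnion]; exact hint.mono_set goodSet_subset
  have htend := tendsto_setIntegral_of_monotone
    (fun n => (hKclosed n).measurableSet) hmono hfi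
  rw [hUnion] at htend
  exact le_of_tendsto' htend fun n =>
    integral_compact_le hpos hint hlam hlam0 (hKcompact n) (hKU n)

lemma ae_bddAbove (hint : IntegrableOn φ (Set.Ioo 0 1)) :
    ∀ᵐ x : ℝ, BddAbove { r : ℝ | ∃ a b : ℝ, 0 ≤ a ∧ a < x ∧ x < b ∧ b ≤ 1 ∧
      r = (b - a)⁻¹ * ∫ t in Set.Ioo a b, |φ t| } := by
  classical
  set ψ : ℝ → ℝ := (Set.Ioo (0:ℝ) 1).indicator φ with hψdef
  have hψ : Integrable ψ := (integrable_indicator_iff measurableSet_Ioo).mpr hint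
  have habs : Integrable (fun t => |ψ t|) := hψ.abs
  have hT : ∀ a b : ℝ, 0 ≤ a → b ≤ 1 →
      (∫ t in Set.Ioo a b, |φ t|) ≤ ∫ t in Set.Ioo (0:ℝ) 1, |φ t| := by
    intro a b h0 hb1
    exact setIntegral_mono_set hint.abs
      (Filter.Eventually.of_forall fun t => abs_nonneg _)
      ((Ioo_sub_unit h0 hb1).eventuallyLE)
  filter_upwards [IsUnifLocDoublingMeasure.ae_tendsto_average (volume : Measure ℝ)
    habs.locallyIntegrable 1] with x hx
  by_contra hnb
  have hseq : ∀ n : ℕ, ∃ a b : ℝ, 0 ≤ a ∧ a < x ∧ x < b ∧ b ≤ 1 ∧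
      (n : ℝ) < (b - a)⁻¹ * ∫ t in Set.Ioo a b, |φ t| := by
    intro n
    obtain ⟨r, hrS, hr⟩ := not_bddAbove_iff.mp hnb n
    obtain ⟨a, b, h0, hax, hxb, hb1, rfl⟩ := hrS
    exact ⟨a, b, h0, hax, hxb, hb1, hr⟩
  choose a b h0 hax hxb hb1 hn using hseq
  set w : ℕ → ℝ := fun n => (a n + b n) / 2 with hw
  set δ : ℕ → ℝ := fun n => (b n - a n) / 2 with hδ
  have hab : ∀ n, 0 < b n - a n := fun n => by linarith [hax n, hxb n]
  have hδ0 : ∀ n, 0 < δ n := fun n => by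
    rw [hδ]; dsimp only; linarith [hab n]
  have havg : ∀ n, (⨍ y in Metric.closedBall (w n) (δ n), |ψ y|) =
      (b n - a n)⁻¹ * ∫ t in Set.Ioo (a n) (b n), |φ t| := by
    intro n
    have hIcc : Metric.closedBall (w n) (δ n) = Set.Icc (a n) (b n) := by
      rw [Real.closedBall_eq_Icc, hw, hδ]
      dsimp only
      congr 1 <;> ring
    have hcongr : (∫ t in Set.Ioo (a n) (b n), |ψ t|) = ∫ t in Set.Ioo (a n) (b n), |φ t| :=
      setIntegral_congr_fun measurableSet_Ioo fun t ht => by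
        rw [hψdef, Set.indicator_of_mem (Ioo_sub_unit (h0 n) (hb1 n) ht)]
    rw [setAverage_eq, hIcc, Real.volume_real_Icc_of_le (sub_pos.mp (hab n)).le, integral_Icc_eq_integral_Ioo, hcongr,
      smul_eq_mul]
  have hδle : ∀ n : ℕ, 1 ≤ n → δ n ≤ (∫ t in Set.Ioo (0:ℝ) 1, |φ t|) / n := by
    intro n hn1
    have hn0 : (0:ℝ) < n := by exact_mod_cast hn1
    have h1 : (n : ℝ) * (b n - a n) ≤ ∫ t in Set.Ioo (a n) (b n), |φ t| := by
      have h2 := (hn n).le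
      rw [← div_eq_inv_mul] at h2
      exact (le_div_iff₀ (hab n)).mp h2
    have h2 := hT (a n) (b n) (h0 n) (hb1 n)
    have h3 : (b n - a n) ≤ (∫ t in Set.Ioo (0:ℝ) 1, |φ t|) / n :=
      (le_div_iff₀ hn0).mpr (by nlinarith)
    rw [hδ]; dsimp only; linarith [hab n]
  have hδtendsto : Filter.Tendsto δ Filter.atTop (nhdsWithin 0 (Set.Ioi 0)) := by
    rw [tendsto_nhdsWithin_iff]
    refine ⟨squeeze_zero' (Filter.Eventually.of_forall fun n => (hδ0 n).le)
      (Filter.eventually_atTop.mpr ⟨1, hδle⟩)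
      (tendsto_const_div_atTop_nhds_zero_nat _),
      Filter.Eventually.of_forall fun n => hδ0 n⟩
  have hmem : ∀ᶠ n in Filter.atTop, x ∈ Metric.closedBall (w n) (1 * δ n) := by
    refine Filter.Eventually.of_forall fun n => ?_
    rw [one_mul, Metric.mem_closedBall, Real.dist_eq, abs_le, hw, hδ]
    dsimp only
    constructor <;> linarith [hax n, hxb n]
  have hlim := hx w δ hδtendsto hmem
  simp only [havg] at hlim
  obtain ⟨M, hM⟩ := hlim.bddAbove_range
  obtain ⟨n, hnM⟩ := exists_nat_gt M
  have hle : (b n - a n)⁻¹ * (∫ t in Set.Ioo (a n) (b n), |φ t|) ≤ M :=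
    hM ⟨n, rfl⟩
  linarith [hn n]

end WeakTypeAux

theorem weak_type_lower_bound (φ : ℝ → ℝ)
    (hpos : ∀ x ∈ Set.Ioo (0:ℝ) 1, 0 < φ x)
    (hint : IntegrableOn φ (Set.Ioo 0 1))
    (lam : ℝ) (hlam : (∫ x in Set.Ioo (0:ℝ) 1, φ x) ≤ lam) :
    (volume {x ∈ Set.Ioo (0:ℝ) 1 | lam < maximalFn φ x}).toReal ≥
      lam⁻¹ * ∫ x in {x ∈ Set.Ioo (0:ℝ) 1 | lam < maximalFn φ x}, φ x := by
  have hlamnn : 0 ≤ lam :=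
    le_trans (setIntegral_nonneg measurableSet_Ioo fun t ht => (hpos t ht).le) hlam
  rcases hlamnn.eq_or_lt with h0 | hlam0
  · rw [← h0, inv_zero, zero_mul]
    exact ENNReal.toReal_nonneg
  set S : ℝ → Set ℝ := fun x => { r : ℝ | ∃ a b : ℝ, 0 ≤ a ∧ a < x ∧ x < b ∧ b ≤ 1 ∧
      r = (b - a)⁻¹ * ∫ t in Set.Ioo a b, |φ t| } with hS
  have hmax : ∀ x, maximalFn φ x = sSup (S x) := fun x => rfl
  set E := {x ∈ Set.Ioo (0:ℝ) 1 | lam < maximalFn φ x} with hE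
  set U := WeakTypeAux.goodSet φ lam with hU
  have hEsub : E ⊆ Set.Ioo (0:ℝ) 1 := fun x hx => hx.1
  have hcongr : ∀ a b : ℝ, 0 ≤ a → b ≤ 1 →
      (∫ t in Set.Ioo a b, |φ t|) = ∫ t in Set.Ioo a b, φ t := fun a b h0 hb1 =>
    setIntegral_congr_fun measurableSet_Ioo fun t ht =>
      abs_of_pos (hpos t (WeakTypeAux.Ioo_sub_unit h0 hb1 ht))
  have hEU : E ⊆ U := by
    rintro x ⟨hxI, hxM⟩
    rw [hmax] at hxM
    have hne : (S x).Nonempty := ⟨(1 - 0)⁻¹ * ∫ t in Set.Ioo (0:ℝ) 1, |φ t|,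
      0, 1, le_rfl, hxI.1, hxI.2, le_rfl, rfl⟩
    have hbdd : BddAbove (S x) := by
      by_contra hnb
      rw [Real.sSup_of_not_bddAbove hnb] at hxM
      exact absurd hxM (not_lt.mpr hlam0.le)
    obtain ⟨r, hrS, hr⟩ := exists_lt_of_lt_csSup hne hxM
    obtain ⟨a, b, h0, hax, hxb, hb1, rfl⟩ := hrS
    have hba : 0 < b - a := by linarith
    refine ⟨a, b, h0, hax, hxb, hb1, ?_⟩
    rw [← hcongr a b h0 hb1]
    rw [← div_eq_inv_mul] at hr
    exact (lt_div_iff₀ hba).mp hr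
  have hN := WeakTypeAux.ae_bddAbove (φ := φ) hint
  rw [MeasureTheory.ae_iff] at hN
  have hUEN : U ⊆ E ∪ {x | ¬ BddAbove (S x)} := by
    intro x hxU
    by_cases hxE : x ∈ E
    · exact Or.inl hxE
    right
    have hxI : x ∈ Set.Ioo (0:ℝ) 1 := WeakTypeAux.goodSet_subset hxU
    obtain ⟨a, b, h0, hax, hxb, hb1, hI⟩ := hxU
    intro hbdd
    have hba : 0 < b - a := by linarith
    have hrS : (b - a)⁻¹ * (∫ t in Set.Ioo a b, |φ t|) ∈ S x :=
      ⟨a, b, h0, hax, hxb, hb1, rfl⟩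
    have hr : lam < (b - a)⁻¹ * ∫ t in Set.Ioo a b, |φ t| := by
      rw [hcongr a b h0 hb1, ← div_eq_inv_mul]
      exact (lt_div_iff₀ hba).mpr (by linarith)
    exact hxE ⟨hxI, by rw [hmax]; exact lt_of_lt_of_le hr (le_csSup hbdd hrS)⟩
  have hfinE : volume E ≠ ⊤ := by
    refine ne_of_lt (lt_of_le_of_lt (measure_mono hEsub) ?_)
    rw [Real.volume_Ioo]
    exact ENNReal.ofReal_lt_top
  have hvolUE : volume U ≤ volume E := by
    calc volume U ≤ volume (E ∪ {x | ¬ BddAbove (S x)}) := measure_mono hUEN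
      _ ≤ volume E + volume {x | ¬ BddAbove (S x)} := measure_union_le _ _
      _ = volume E := by rw [hN, add_zero]
  have hUmeas : MeasurableSet U := WeakTypeAux.isOpen_goodSet.measurableSet
  have h1 : (∫ x in E, φ x) ≤ ∫ x in U, φ x :=
    setIntegral_mono_set (hint.mono_set WeakTypeAux.goodSet_subset)
      (WeakTypeAux.restrict_nonneg hpos hUmeas WeakTypeAux.goodSet_subset)
      hEU.eventuallyLE
  have h2 := WeakTypeAux.integral_goodSet_le hpos hint hlam hlam0
  have h3 : (volume U).toReal ≤ (volume E).toReal := ENNReal.toReal_mono hfinE hvolUE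
  rw [ge_iff_le]
  calc lam⁻¹ * ∫ x in E, φ x ≤ lam⁻¹ * (lam * (volume U).toReal) :=
        mul_le_mul_of_nonneg_left (h1.trans h2) (inv_nonneg.mpr hlam0.le)
    _ = (volume U).toReal := by field_simp
    _ ≤ (volume E).toReal := h3
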